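/- The function g is differentiable on [0,∞) with g'(0) = 0, where g(η) = (1/η²)(1/cosh²η − tanh(η)/η) for η > 0 and g(0) = −2/3. -/

import Mathlib

noncomputable def g (η : ℝ) : ℝ :=
  if η = 0 then -2/3 else (1/η^2) * (1/(Real.cosh η)^2 - Real.tanh η / η)

open Real MeasureTheory intervalIntegral Metric

noncomputable def phiAux (η : ℝ) : ℝ := ∫ t in (0:ℝ)..1, (1-t)^2 * Real.cosh (2*t*η)

lemma contF (η : ℝ) : Continuous (fun t : ℝ => (1-t)^2 * Real.cosh (2*t*η)) := by
  fun_prop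

lemma contF' (η : ℝ) : Continuous (fun t : ℝ => (1-t)^2 * (Real.sinh (2*t*η) * (2*t))) := by
  fun_prop

lemma phiAux_hasDeriv (x₀ : ℝ) :
    HasDerivAt phiAux (∫ t in (0:ℝ)..1, (1-t)^2 * (Real.sinh (2*t*x₀) * (2*t))) x₀ := by
  have := intervalIntegral.hasDerivAt_integral_of_dominated_loc_of_deriv_le
    (F := fun x t => (1-t)^2 * Real.cosh (2*t*x))
    (F' := fun x t => (1-t)^2 * (Real.sinh (2*t*x) * (2*t)))
    (x₀ := x₀) (a := 0) (b := 1) (bound := fun _ => 2 * Real.sinh (2*(|x₀|+1)))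
    (μ := volume) (s := ball x₀ 1) (ball_mem_nhds x₀ one_pos)
    (Filter.Eventually.of_forall fun x => (contF x).aestronglyMeasurable)
    ((contF x₀).intervalIntegrable _ _)
    ((contF' x₀).aestronglyMeasurable)
    ?_ (intervalIntegrable_const) ?_
  · exact this.2
  · refine Filter.Eventually.of_forall fun t ht x hx => ?_
    rw [Set.uIoc_of_le (by norm_num : (0:ℝ) ≤ 1)] at ht
    have ht0 : 0 < t := ht.1
    have ht1 : t ≤ 1 := ht.2
    have h1 : |(1-t)^2| ≤ 1 := by
      rw [abs_of_nonneg (sq_nonneg _)]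
      nlinarith
    have hxb : |x| ≤ |x₀| + 1 := by
      have := mem_ball_iff_norm.mp hx
      have := abs_sub_abs_le_abs_sub x x₀
      simp only [Real.norm_eq_abs] at *
      linarith
    have h2 : |Real.sinh (2*t*x)| ≤ Real.sinh (2*(|x₀|+1)) := by
      rw [Real.abs_sinh]
      apply Real.sinh_le_sinh.mpr
      have : |2*t*x| = 2*t*|x| := by
        rw [abs_mul, abs_of_nonneg (by linarith : (0:ℝ) ≤ 2*t)]
      rw [this]
      nlinarith [abs_nonneg x]
    have h3 : |2*t| ≤ 2 := by
      rw [abs_of_nonneg (by linarith : (0:ℝ) ≤ 2*t)]; linarith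
    have hs : 0 ≤ Real.sinh (2*(|x₀|+1)) := by
      rw [show (0:ℝ) = Real.sinh 0 by simp]
      exact Real.sinh_le_sinh.mpr (by positivity)
    calc ‖(1-t)^2 * (Real.sinh (2*t*x) * (2*t))‖
        = |(1-t)^2| * (|Real.sinh (2*t*x)| * |2*t|) := by
          simp [Real.norm_eq_abs, abs_mul]
      _ ≤ 1 * (Real.sinh (2*(|x₀|+1)) * 2) := by
          apply mul_le_mul h1 _ (by positivity) (by norm_num)
          apply mul_le_mul h2 h3 (abs_nonneg _) hs
      _ = 2 * Real.sinh (2*(|x₀|+1)) := by ring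
  · refine Filter.Eventually.of_forall fun t ht x hx => ?_
    have h := ((Real.hasDerivAt_cosh (2*t*x)).comp x
      (((hasDerivAt_id x).const_mul (2*t)))).const_mul ((1-t)^2)
    exact h.congr_deriv (by ring)

lemma phiAux_diff (x : ℝ) : DifferentiableAt ℝ phiAux x :=
  (phiAux_hasDeriv x).differentiableAt

lemma phiAux_zero : phiAux 0 = 1/3 := by
  unfold phiAux
  have : ∀ t ∈ Set.uIcc (0:ℝ) 1,
      HasDerivAt (fun t : ℝ => -(1-t)^3/3) ((1-t)^2 * Real.cosh (2*t*0)) t := by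
    intro t _
    have h : HasDerivAt (fun t : ℝ => -(1-t)^3/3) ((1-t)^2) t := by
      have h1 : HasDerivAt (fun t : ℝ => (1-t)) (-1) t := by
        simpa using (hasDerivAt_id t).const_sub 1
      have := ((h1.pow 3).neg).div_const 3
      exact this.congr_deriv (by norm_num)
    simpa using h
  rw [intervalIntegral.integral_eq_sub_of_hasDerivAt this
    ((contF 0).intervalIntegrable _ _)]
  norm_num

lemma phiAux_eq {η : ℝ} (hη : η ≠ 0) :
    phiAux η = Real.sinh (2*η)/(4*η^3) - 1/(2*η^2) := by
  unfold phiAux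
  set F : ℝ → ℝ := fun t =>
    ((1-t)^2/(2*η) + 1/(4*η^3)) * Real.sinh (2*t*η) + (1-t)/(2*η^2) * Real.cosh (2*t*η)
  have key : ∀ t ∈ Set.uIcc (0:ℝ) 1,
      HasDerivAt F ((1-t)^2 * Real.cosh (2*t*η)) t := by
    intro t _
    have h1 : HasDerivAt (fun t : ℝ => (1-t)) (-1) t := by
      simpa using (hasDerivAt_id t).const_sub 1
    have hA := ((h1.pow 2).div_const (2*η)).add_const (1/(4*η^3))
    have hin : HasDerivAt (fun t : ℝ => 2*t*η) (2*1*η) t :=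
      ((hasDerivAt_id t).const_mul 2).mul_const η
    have hS := (Real.hasDerivAt_sinh (2*t*η)).comp t hin
    have hC := (Real.hasDerivAt_cosh (2*t*η)).comp t hin
    have hB := h1.div_const (2*η^2)
    have := (hA.mul hS).add (hB.mul hC)
    refine HasDerivAt.congr_deriv this ?_
    simp only [Function.comp, Pi.pow_apply]
    field_simp
    ring
  rw [intervalIntegral.integral_eq_sub_of_hasDerivAt key
    ((contF η).intervalIntegrable _ _)]
  simp only [F]
  norm_num
  field_simp

lemma g_eq : g = fun η => -2 * phiAux η / (Real.cosh η)^2 := by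
  funext η
  rcases eq_or_ne η 0 with h | h
  · subst h
    simp [g, phiAux_zero]
    norm_num
  · have hc : Real.cosh η ≠ 0 := (Real.cosh_pos η).ne'
    simp only [g, if_neg h, phiAux_eq h]
    rw [Real.tanh_eq_sinh_div_cosh, Real.sinh_two_mul]
    field_simp
    ring

lemma g_diff (x : ℝ) : DifferentiableAt ℝ g x := by
  rw [g_eq]
  exact ((phiAux_diff x).const_mul (-2)).div
    ((Real.differentiable_cosh x).pow 2) (by positivity)

lemma g_neg (x : ℝ) : g (-x) = g x := by
  rcases eq_or_ne x 0 with h | h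
  · subst h; norm_num
  · unfold g
    rw [if_neg (neg_ne_zero.mpr h), if_neg h]
    simp [Real.cosh_neg, Real.tanh_neg, neg_sq, neg_div_neg_eq]

lemma deriv_g_zero : deriv g 0 = 0 := by
  have h0 : HasDerivAt g (deriv g 0) 0 := (g_diff 0).hasDerivAt
  have h0' : HasDerivAt g (deriv g 0) (-0) := by simpa using h0
  have h1 := HasDerivAt.comp 0 h0' (hasDerivAt_neg 0)
  have h2 : (g ∘ fun x : ℝ => -x) = g := by
    funext x; simp [Function.comp, g_neg]
  rw [h2] at h1
  have := h0.unique h1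
  linarith

theorem g_differentiable_on_Ici_and_deriv_zero :
    (∀ η ∈ Set.Ici (0:ℝ), DifferentiableWithinAt ℝ g (Set.Ici 0) η) ∧
      derivWithin g (Set.Ici 0) 0 = 0 := by
  constructor
  · exact fun η _ => (g_diff η).differentiableWithinAt
  · rw [DifferentiableAt.derivWithin (g_diff 0) (uniqueDiffOn_Ici 0 0 Set.self_mem_Ici)]
    exact deriv_g_zero
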